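/- Let Π_α be the probability distribution on ℝᵈ with density p_α(x) = e^{-‖x‖^α}/Z_α for α ≥ 2. For ρ > 0, the probability of the ball B(0, ρ) equals P(X ≤ ρ^α) where X ∼ Gamma(d/α, 1). Consequently, defining τ(s) = (1/α + log(1/s)/d + √(2 log(1/s)/(dα)))^{1/α}, the ball of radius τ(s)·d^{1/α} satisfies Π_α(B(0, τ(s)d^{1/α})) ≥ 1 - s for every s ∈ (0,1). -/

import Mathlib

open MeasureTheory ProbabilityTheory Real
open scoped ENNReal NNReal

private lemma log_le_aux' {x : ℝ} (hx : 1 ≤ x) : Real.log x ≤ (x - x⁻¹) / 2 := by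
  have h0 : (0:ℝ) < x := lt_of_lt_of_le one_pos hx
  calc Real.log x ≤ Real.sinh (Real.log x) :=
        Real.self_le_sinh_iff.mpr (Real.log_nonneg hx)
    _ = (x - x⁻¹) / 2 := Real.sinh_log h0

private lemma gamma_chernoff' {k l : ℝ} (b : ℝ) (hk : 0 < k) (hl0 : 0 ≤ l) (hl1 : l < 1) :
    gammaMeasure k 1 (Set.Ioi b) ≤
      ENNReal.ofReal (Real.exp (-(l*b)) * (1/(1-l)) ^ k) := by
  have h1l : 0 < 1 - l := by linarith
  set g : ℝ → ℝ := fun x => (Real.exp (-(l*b)) / Real.Gamma k) *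
      (x ^ (k-1) * Real.exp (-((1-l) * x))) with hg
  set f : ℝ → ℝ := fun x => Real.exp (l*(x-b)) * gammaPDFReal k 1 x with hf
  have hfg : f = Set.indicator (Set.Ici 0) g := by
    funext x
    by_cases hx : (0:ℝ) ≤ x
    · simp only [hf, hg, gammaPDFReal, if_pos hx, Set.indicator_of_mem (Set.mem_Ici.mpr hx),
        Real.one_rpow]
      have key : Real.exp (l * (x - b)) * Real.exp (-(1 * x)) =
          Real.exp (-(l * b)) * Real.exp (-((1 - l) * x)) := by
        rw [← Real.exp_add, ← Real.exp_add]; congr 1; ring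
      linear_combination (x ^ (k-1) / Real.Gamma k) * key
    · simp only [hf, hg, gammaPDFReal, if_neg hx,
        Set.indicator_of_notMem (fun h => hx (Set.mem_Ici.mp h)), mul_zero]
  have hint_h : IntegrableOn (fun x : ℝ => x ^ (k-1) * Real.exp (-((1-l) * x)))
      (Set.Ioi 0) := by
    have := integrableOn_rpow_mul_exp_neg_mul_rpow (p := 1) (s := k - 1) (b := 1 - l)
      (by linarith) zero_lt_one h1l
    simpa only [Real.rpow_one, neg_mul] using this
  have hint_g : IntegrableOn g (Set.Ici 0) := by
    rw [integrableOn_Ici_iff_integrableOn_Ioi]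
    exact (hint_h.const_mul _)
  have hint_f : Integrable f := by
    rw [hfg, integrable_indicator_iff measurableSet_Ici]
    exact hint_g
  have hf_nonneg : ∀ x, 0 ≤ f x := fun x =>
    mul_nonneg (Real.exp_nonneg _) (gammaPDFReal_nonneg hk one_pos x)
  have hstep1 : gammaMeasure k 1 (Set.Ioi b) ≤ ∫⁻ x, ENNReal.ofReal (f x) := by
    rw [gammaMeasure, withDensity_apply _ measurableSet_Ioi]
    refine le_trans (setLIntegral_mono' measurableSet_Ioi ?_)
      (setLIntegral_le_lintegral _ _)
    intro x hx
    rw [gammaPDF, hf]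
    rw [ENNReal.ofReal_mul (Real.exp_nonneg _)]
    refine le_mul_of_one_le_left zero_le ?_
    rw [show (1:ℝ≥0∞) = ENNReal.ofReal 1 by simp]
    exact ENNReal.ofReal_le_ofReal
      (Real.one_le_exp (by nlinarith [Set.mem_Ioi.mp hx]))
  have hlint : ∫⁻ x, ENNReal.ofReal (f x) = ENNReal.ofReal (∫ x, f x) :=
    (ofReal_integral_eq_lintegral_ofReal hint_f (ae_of_all _ hf_nonneg)).symm
  have hval : ∫ x, f x = Real.exp (-(l*b)) * (1/(1-l)) ^ k := by
    rw [hfg, integral_indicator measurableSet_Ici, integral_Ici_eq_integral_Ioi, hg]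
    rw [integral_const_mul, integral_rpow_mul_exp_neg_mul_Ioi hk h1l]
    have : Real.Gamma k ≠ 0 := (Real.Gamma_pos_of_pos hk).ne'
    field_simp
  rw [hlint, hval] at hstep1
  exact hstep1

private lemma gamma_tail' {k t : ℝ} (hk : 0 < k) (ht : 0 < t) :
    gammaMeasure k 1 (Set.Ioi (k + t + Real.sqrt (2*k*t))) ≤
      ENNReal.ofReal (Real.exp (-t)) := by
  set σ := Real.sqrt (2*t/k) with hσ
  have hσpos : 0 < σ := Real.sqrt_pos.mpr (by positivity)
  have hσsq : σ^2 = 2*t/k := Real.sq_sqrt (by positivity)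
  have hsqrt : Real.sqrt (2*k*t) = k * σ := by
    rw [hσ, ← Real.sqrt_sq hk.le, ← Real.sqrt_mul (sq_nonneg k)]
    congr 1
    field_simp
    ring
    exact Real.sq_sqrt (sq_nonneg _)
  have h1σ : 0 < 1 + σ := by linarith
  set l := σ/(1+σ) with hl
  have hl0 : 0 ≤ l := by positivity
  have hl1 : l < 1 := by rw [hl, div_lt_one h1σ]; linarith
  refine (gamma_chernoff' _ hk hl0 hl1).trans (ENNReal.ofReal_le_ofReal ?_)
  have h1l' : (1:ℝ)/(1-l) = 1 + σ := by
    rw [hl]; field_simp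
    ring
  rw [h1l']
  have hpow : (1+σ) ^ k = Real.exp (k * Real.log (1+σ)) := by
    rw [Real.rpow_def_of_pos h1σ]; ring_nf
  rw [hpow, ← Real.exp_add]
  apply Real.exp_le_exp.mpr
  have hlog : Real.log (1+σ) ≤ (σ^2 + 2*σ)/(2*(1+σ)) := by
    refine (log_le_aux' (by linarith)).trans_eq ?_
    field_simp
    ring
  have ht' : t = k * σ^2 / 2 := by rw [hσsq]; field_simp
  have hklog : k * Real.log (1+σ) ≤ k * ((σ^2 + 2*σ)/(2*(1+σ))) :=
    mul_le_mul_of_nonneg_left hlog hk.le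
  have key : -( (σ/(1+σ)) * (k + k*σ^2/2 + k*σ) ) + k * ((σ^2+2*σ)/(2*(1+σ)))
      = -(k*σ^2/2) := by
    field_simp
    ring
  rw [hsqrt, ht', hl]
  linarith [key, hklog]

private lemma nontriv' (d : ℕ) (hd : 1 ≤ d) : Nontrivial (EuclideanSpace ℝ (Fin d)) := by
  have : Module.finrank ℝ (EuclideanSpace ℝ (Fin d)) = d := finrank_euclideanSpace_fin
  exact Module.nontrivial_of_finrank_pos (R := ℝ) (by rw [this]; omega)

private lemma polar_total' (d : ℕ) (hd : 1 ≤ d) {α : ℝ} (hα : 0 < α) :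
    ∫ x : EuclideanSpace ℝ (Fin d), Real.exp (-‖x‖ ^ α)
      = ((d : ℝ) * (volume (Metric.ball (0:EuclideanSpace ℝ (Fin d)) 1)).toReal / α) *
          Real.Gamma ((d:ℝ)/α) := by
  haveI := nontriv' d hd
  have h := integral_fun_norm_addHaar (volume : Measure (EuclideanSpace ℝ (Fin d)))
    (fun r => Real.exp (-r ^ α))
  rw [finrank_euclideanSpace_fin] at h
  rw [h, nsmul_eq_mul, smul_eq_mul]
  have h2 : ∫ y in Set.Ioi (0:ℝ), y ^ (d - 1) • Real.exp (-y ^ α)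
      = ∫ y in Set.Ioi (0:ℝ), y ^ ((d:ℝ) - 1) * Real.exp (-y ^ α) := by
    refine setIntegral_congr_fun measurableSet_Ioi (fun y hy => ?_)
    rw [smul_eq_mul, ← Real.rpow_natCast y (d-1), Nat.cast_sub hd, Nat.cast_one]
  rw [h2, integral_rpow_mul_exp_neg_rpow hα (by simp; positivity)]
  rw [sub_add_cancel]
  rw [measureReal_def]
  ring

private lemma polar_ball' (d : ℕ) (hd : 1 ≤ d) {α : ℝ} (hα : 0 < α) (ρ : ℝ) (hρ : 0 < ρ) :
    ∫ x : EuclideanSpace ℝ (Fin d) in Metric.ball 0 ρ, Real.exp (-‖x‖ ^ α)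
      = ((d : ℝ) * (volume (Metric.ball (0:EuclideanSpace ℝ (Fin d)) 1)).toReal / α) *
        ∫ t in Set.Ioo 0 (ρ ^ α), t ^ ((d:ℝ)/α - 1) * Real.exp (-t) := by
  haveI := nontriv' d hd
  set F : ℝ → ℝ := Set.indicator (Set.Iio ρ) (fun r => Real.exp (-r ^ α)) with hF
  have step1 : ∫ x : EuclideanSpace ℝ (Fin d) in Metric.ball 0 ρ, Real.exp (-‖x‖ ^ α)
      = ∫ x : EuclideanSpace ℝ (Fin d), F ‖x‖ := by
    rw [← integral_indicator measurableSet_ball]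
    refine integral_congr_ae (ae_of_all _ fun x => ?_)
    show Set.indicator (Metric.ball 0 ρ)
        (fun x : EuclideanSpace ℝ (Fin d) => Real.exp (-‖x‖ ^ α)) x
        = Set.indicator (Set.Iio ρ) (fun r => Real.exp (-r ^ α)) ‖x‖
    by_cases hx : ‖x‖ < ρ
    · rw [Set.indicator_of_mem (mem_ball_zero_iff.mpr hx),
        Set.indicator_of_mem (Set.mem_Iio.mpr hx)]
    · rw [Set.indicator_of_notMem (fun h => hx (mem_ball_zero_iff.mp h)),
        Set.indicator_of_notMem (fun h => hx (Set.mem_Iio.mp h))]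
  have step2 := integral_fun_norm_addHaar (volume : Measure (EuclideanSpace ℝ (Fin d))) F
  rw [finrank_euclideanSpace_fin] at step2
  set g : ℝ → ℝ := Set.indicator (Set.Iio (ρ ^ α)) (fun t => t ^ ((d:ℝ)/α - 1) * Real.exp (-t))
    with hg
  have step3 : ∫ y in Set.Ioi (0:ℝ), (|α| * y ^ (α - 1)) • g (y ^ α)
      = ∫ t in Set.Ioi (0:ℝ), g t := integral_comp_rpow_Ioi g hα.ne'
  have step4 : ∫ t in Set.Ioi (0:ℝ), g t
      = ∫ t in Set.Ioo 0 (ρ ^ α), t ^ ((d:ℝ)/α - 1) * Real.exp (-t) := by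
    rw [hg, setIntegral_indicator measurableSet_Iio, Set.Ioi_inter_Iio]
  have step5 : ∫ y in Set.Ioi (0:ℝ), (|α| * y ^ (α - 1)) • g (y ^ α)
      = α * ∫ y in Set.Ioi (0:ℝ), y ^ (d - 1) • F y := by
    rw [← integral_const_mul]
    refine setIntegral_congr_fun measurableSet_Ioi (fun y hy => ?_)
    have hy0 : (0:ℝ) < y := hy
    rw [smul_eq_mul, smul_eq_mul, abs_of_pos hα]
    by_cases hyρ : y < ρ
    · have hmem : y ^ α ∈ Set.Iio (ρ ^ α) := Set.mem_Iio.mpr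
        (Real.rpow_lt_rpow hy0.le hyρ hα)
      rw [hg, Set.indicator_of_mem hmem, hF, Set.indicator_of_mem (Set.mem_Iio.mpr hyρ)]
      rw [← Real.rpow_mul hy0.le]
      have e2 : (y:ℝ) ^ ((d:ℕ) - 1) = y ^ ((d:ℝ) - 1) := by
        rw [← Real.rpow_natCast y (d-1), Nat.cast_sub hd, Nat.cast_one]
      rw [e2]
      have e3 : α * y ^ (α - 1) * (y ^ (α * ((d:ℝ)/α - 1)) * Real.exp (-y ^ α))
          = α * ((y ^ (α - 1) * y ^ (α * ((d:ℝ)/α - 1))) * Real.exp (-y ^ α)) := by ring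
      rw [e3, ← Real.rpow_add hy0]
      have e4 : α - 1 + α * ((d:ℝ)/α - 1) = (d:ℝ) - 1 := by
        field_simp
        ring
      rw [e4]
    · have hmem : y ^ α ∉ Set.Iio (ρ ^ α) := by
        intro h
        exact absurd (Set.mem_Iio.mp h)
          (not_lt.mpr (Real.rpow_le_rpow hρ.le (not_lt.mp hyρ) hα.le))
      rw [hg, Set.indicator_of_notMem hmem, hF,
        Set.indicator_of_notMem (fun h => hyρ (Set.mem_Iio.mp h))]
      simp
  rw [step1, step2, nsmul_eq_mul, smul_eq_mul, ← step4, ← step3, step5]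
  have hαne : α ≠ 0 := hα.ne'
  field_simp
  rw [measureReal_def]
  ring

private lemma gamma_Iic' {k b : ℝ} (hk : 0 < k) (hb : 0 ≤ b) :
    gammaMeasure k 1 (Set.Iic b) =
      ENNReal.ofReal ((1/Real.Gamma k) * ∫ t in Set.Ioo 0 b, t ^ (k-1) * Real.exp (-t)) := by
  rw [gammaMeasure, withDensity_apply _ measurableSet_Iic,
    lintegral_Iic_eq_lintegral_Iio_add_Icc _ hb,
    lintegral_gammaPDF_of_nonpos le_rfl, zero_add,
    ← setLIntegral_congr (Ioo_ae_eq_Icc (μ := (volume : Measure ℝ)) (a := 0) (b := b))]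
  have hcong : ∫⁻ t in Set.Ioo 0 b, gammaPDF k 1 t
      = ∫⁻ t in Set.Ioo 0 b,
          ENNReal.ofReal ((1/Real.Gamma k) * (t ^ (k-1) * Real.exp (-t))) := by
    refine setLIntegral_congr_fun measurableSet_Ioo (fun t ht => ?_)
    rw [gammaPDF_of_nonneg ht.1.le, Real.one_rpow, one_mul]
    congr 1
    ring
  rw [hcong]
  have h1 : IntegrableOn (fun t => t ^ (k-1) * Real.exp (-t)) (Set.Ioo 0 b) := by
    have h2 := (Real.GammaIntegral_convergent hk).mono_set (Set.Ioo_subset_Ioi_self : Set.Ioo 0 b ⊆ Set.Ioi 0)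
    exact h2.congr_fun (fun t ht => mul_comm _ _) measurableSet_Ioo
  rw [← ofReal_integral_eq_lintegral_ofReal (h1.const_mul _)
    ((ae_restrict_iff' measurableSet_Ioo).mpr (ae_of_all _ fun t ht => by
      have h0 := ht.1.le
      positivity))]
  rw [integral_const_mul]

/-- For the thin-tailed distribution `Π_α` with density `e^{-‖x‖^α}/Z_α`: the probability
of the ball `B(0,ρ)` equals `P(X ≤ ρ^α)` for `X ∼ Gamma(d/α, 1)`, and with
`τ(s) = (1/α + log(1/s)/d + √(2 log(1/s)/(dα)))^{1/α}` the ball of radius `τ(s)d^{1/α}`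
has probability at least `1 - s` for every `s ∈ (0,1)`. -/
theorem thin_tail_concentration (d : ℕ) (hd : 1 ≤ d) (α : ℝ) (hα : 2 ≤ α)
    (Z : ℝ) (hZ : Z = ∫ x : EuclideanSpace ℝ (Fin d), Real.exp (-‖x‖ ^ α))
    (Pialpha : Measure (EuclideanSpace ℝ (Fin d)))
    (hPi : Pialpha = volume.withDensity fun x => ENNReal.ofReal (Real.exp (-‖x‖ ^ α) / Z)) :
    (∀ ρ : ℝ, 0 < ρ →
      (Pialpha (Metric.ball 0 ρ)).toReal = (gammaMeasure (d / α) 1 (Set.Iic (ρ ^ α))).toReal) ∧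
    (∀ s : ℝ, s ∈ Set.Ioo (0:ℝ) 1 →
      1 - s ≤ (Pialpha (Metric.ball 0
        ((1 / α + Real.log (1 / s) / d + Real.sqrt (2 * Real.log (1 / s) / (d * α)))
          ^ (1 / α) * (d : ℝ) ^ (1 / α)))).toReal) := by
  have hα0 : (0:ℝ) < α := by linarith
  have hαne : α ≠ 0 := hα0.ne'
  have hd0 : (0:ℝ) < d := by exact_mod_cast hd
  set k : ℝ := (d:ℝ)/α with hkdef
  have hk : 0 < k := by positivity
  set c : ℝ := (volume (Metric.ball (0:EuclideanSpace ℝ (Fin d)) 1)).toReal with hc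
  have hcpos : 0 < c := by
    rw [hc]
    exact ENNReal.toReal_pos (Metric.measure_ball_pos volume 0 one_pos).ne'
      measure_ball_lt_top.ne
  have hZval : Z = ((d:ℝ) * c / α) * Real.Gamma k := by
    rw [hZ, polar_total' d hd hα0, hc]
  have hΓpos : 0 < Real.Gamma k := Real.Gamma_pos_of_pos hk
  have hZpos : 0 < Z := by rw [hZval]; positivity
  have hcont : Continuous fun x : EuclideanSpace ℝ (Fin d) => Real.exp (-‖x‖ ^ α) :=
    Real.continuous_exp.comp ((continuous_norm.rpow_const (fun x => Or.inr hα0.le)).neg)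
  -- Part 1
  have part1 : ∀ ρ : ℝ, 0 < ρ →
      (Pialpha (Metric.ball 0 ρ)).toReal
        = (gammaMeasure ((d:ℝ) / α) 1 (Set.Iic (ρ ^ α))).toReal := by
    intro ρ hρ
    have hint : IntegrableOn
        (fun x : EuclideanSpace ℝ (Fin d) => Real.exp (-‖x‖ ^ α) / Z)
        (Metric.ball 0 ρ) := by
      have h1 : IntegrableOn (fun x : EuclideanSpace ℝ (Fin d) => Real.exp (-‖x‖ ^ α))
          (Metric.closedBall 0 ρ) :=
        hcont.continuousOn.integrableOn_compact (isCompact_closedBall 0 ρ)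
      exact (h1.mono_set Metric.ball_subset_closedBall).div_const Z
    have hmeas : Pialpha (Metric.ball 0 ρ)
        = ENNReal.ofReal (∫ x : EuclideanSpace ℝ (Fin d) in Metric.ball 0 ρ,
            Real.exp (-‖x‖ ^ α) / Z) := by
      rw [hPi, withDensity_apply _ measurableSet_ball]
      exact (ofReal_integral_eq_lintegral_ofReal hint
        (ae_of_all _ fun x => by positivity)).symm
    have hI_nonneg : 0 ≤ ∫ t in Set.Ioo 0 (ρ ^ α), t ^ (k-1) * Real.exp (-t) :=
      setIntegral_nonneg measurableSet_Ioo (fun t ht => by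
        have := ht.1.le
        positivity)
    rw [hmeas, gamma_Iic' hk (Real.rpow_nonneg hρ.le α)]
    rw [ENNReal.toReal_ofReal (setIntegral_nonneg measurableSet_ball
        (fun x _ => by positivity)),
      ENNReal.toReal_ofReal (by positivity)]
    rw [integral_div, polar_ball' d hd hα0 ρ hρ, hZval]
    rw [← hc, ← hkdef]
    have hne : (d:ℝ) * c / α ≠ 0 := by positivity
    field_simp
  refine ⟨part1, ?_⟩
  intro s hs
  set t : ℝ := Real.log (1/s) with htdef
  have ht : 0 < t := by
    rw [htdef, one_div, Real.log_inv]
    linarith [Real.log_neg hs.1 hs.2]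
  set u : ℝ := 1/α + t/d + Real.sqrt (2*t/(d*α)) with hu
  have hupos : 0 < u := by
    have h1 : (0:ℝ) < 1/α := by positivity
    have h2 : (0:ℝ) ≤ t/d := by positivity
    have h3 : (0:ℝ) ≤ Real.sqrt (2*t/(d*α)) := Real.sqrt_nonneg _
    rw [hu]; linarith
  set R : ℝ := u ^ (1/α) * (d:ℝ) ^ (1/α) with hR
  have hRpos : 0 < R := by
    rw [hR]
    exact mul_pos (Real.rpow_pos_of_pos hupos _) (Real.rpow_pos_of_pos hd0 _)
  have hRα : R ^ α = k + t + Real.sqrt (2*k*t) := by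
    have hsq : (d:ℝ) * Real.sqrt (2*t/(d*α)) = Real.sqrt (2*k*t) := by
      rw [← Real.sqrt_sq hd0.le, ← Real.sqrt_mul (sq_nonneg _)]
      congr 1
      rw [hkdef]
      field_simp
      ring
      exact (Real.sqrt_sq hd0.le).symm
    rw [hR, Real.mul_rpow (Real.rpow_nonneg hupos.le _) (Real.rpow_nonneg hd0.le _),
      ← Real.rpow_mul hupos.le, ← Real.rpow_mul hd0.le, one_div_mul_cancel hαne,
      Real.rpow_one, Real.rpow_one]
    rw [hu, ← hsq, hkdef]
    field_simp
  haveI : IsProbabilityMeasure (gammaMeasure k 1) := isProbabilityMeasure_gammaMeasure hk one_pos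
  have htail := gamma_tail' hk ht
  have hexps : Real.exp (-t) = s := by
    rw [htdef, one_div, Real.log_inv, neg_neg, Real.exp_log hs.1]
  rw [hexps] at htail
  have hcompl : gammaMeasure k 1 (Set.Iic (R ^ α))
      = 1 - gammaMeasure k 1 (Set.Ioi (R ^ α)) := by
    rw [← Set.compl_Ioi]
    exact prob_compl_eq_one_sub measurableSet_Ioi
  have hioile : (gammaMeasure k 1 (Set.Ioi (R ^ α))).toReal ≤ s := by
    rw [hRα]
    calc (gammaMeasure k 1 (Set.Ioi (k + t + Real.sqrt (2*k*t)))).toReal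
        ≤ (ENNReal.ofReal s).toReal := ENNReal.toReal_mono ENNReal.ofReal_ne_top htail
      _ = s := ENNReal.toReal_ofReal hs.1.le
  have h1 := part1 R hRpos
  rw [← hkdef] at h1
  rw [h1, hcompl, ENNReal.toReal_sub_of_le prob_le_one ENNReal.one_ne_top, ENNReal.toReal_one]
  linarith
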